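/- For every constant C > 0 there exists a constant c > 0 such that: for every multiplicative function f : ℕ → ℝ with f ≥ 0, f(1) = 1, f(mn) = f(m)f(n) whenever gcd(m,n) = 1, and f(p^k) ≤ C·k for every prime p and every integer k ≥ 1, and for every real x ≥ 2, one has Σ_{n ≤ x} f(n) ≤ c·(x/log x)·exp(Σ_{p ≤ x, p prime} f(p)/p). -/

import Mathlib

open Finset

private lemma geomA (K : ℕ) : ∑ a ∈ Finset.range K, (a : ℝ) / 2 ^ a = 2 - (2 * K + 2) / 2 ^ K := by
  induction K with
  | zero => norm_num
  | succ K ih =>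
    rw [Finset.sum_range_succ, ih]
    have h2 : (2:ℝ) ^ K ≠ 0 := by positivity
    push_cast
    field_simp
    ring

private lemma geomB (K : ℕ) :
    ∑ a ∈ Finset.range K, ((a : ℝ))^2 / 2 ^ a = 6 - (2 * (K:ℝ)^2 + 4 * K + 6) / 2 ^ K := by
  induction K with
  | zero => norm_num
  | succ K ih =>
    rw [Finset.sum_range_succ, ih]
    have h2 : (2:ℝ) ^ K ≠ 0 := by positivity
    push_cast
    field_simp
    ring

private lemma basel (N : ℕ) : ∑ k ∈ Finset.Icc 2 (N+1), (1:ℝ) / (k:ℝ)^2 ≤ 1 - 1/(N+1) := by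
  induction N with
  | zero => simp
  | succ N ih =>
    rw [Finset.sum_Icc_succ_top (by omega)]
    have h1 : (0:ℝ) < (N:ℝ) + 1 := by positivity
    have h2 : (0:ℝ) < (N:ℝ) + 2 := by positivity
    have key : (1:ℝ) / ((N+2:ℕ):ℝ)^2 ≤ 1/((N:ℝ)+1) - 1/((N:ℝ)+2) := by
      push_cast
      rw [div_sub_div _ _ (ne_of_gt h1) (ne_of_gt h2)]
      rw [div_le_div_iff₀ (by positivity) (by positivity)]
      nlinarith
    push_cast at ih key ⊢
    have e : ((N:ℝ)+1+1) = (N:ℝ)+2 := by ring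
    rw [e]
    linarith

private lemma sqrtlog (N : ℕ) :
    ∑ k ∈ Finset.Icc 2 (N+1), Real.log k / (k:ℝ)^2 ≤ 4 - 4 / Real.sqrt ((N:ℝ)+1) := by
  induction N with
  | zero => simp
  | succ N ih =>
    rw [Finset.sum_Icc_succ_top (by omega)]
    set s := Real.sqrt ((N:ℝ)+1) with hsdef
    set t := Real.sqrt ((N:ℝ)+2) with htdef
    have hs : 0 < s := Real.sqrt_pos.mpr (by positivity)
    have ht : 0 < t := Real.sqrt_pos.mpr (by positivity)
    have hs2 : s^2 = (N:ℝ)+1 := Real.sq_sqrt (by positivity)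
    have ht2 : t^2 = (N:ℝ)+2 := Real.sq_sqrt (by positivity)
    have hst : s ≤ t := Real.sqrt_le_sqrt (by linarith)
    have hlog : Real.log ((N:ℝ)+2) ≤ 2 * t := by
      have h1 : Real.log ((N:ℝ)+2) = 2 * Real.log t := by
        rw [← ht2, Real.log_pow]; push_cast; ring
      have h2 : Real.log t ≤ t - 1 := Real.log_le_sub_one_of_pos ht
      linarith
    have h3 : 1/(2*t) ≤ t - s := by
      rw [div_le_iff₀ (by positivity)]
      nlinarith
    have key : Real.log ((N:ℝ)+2) / ((N:ℝ)+2)^2 ≤ 4/s - 4/t := by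
      have h4 : 4/s - 4/t = 4*(t-s)/(s*t) := by field_simp
      rw [h4]
      calc Real.log ((N:ℝ)+2) / ((N:ℝ)+2)^2 ≤ (2*t) / ((N:ℝ)+2)^2 := by
              gcongr
            _ = 2/t^3 := by rw [← ht2]; field_simp
            _ ≤ 4*(t-s)/(s*t) := by
              rw [div_le_div_iff₀ (by positivity) (by positivity)]
              have h5 : t^2/2 ≤ (t-s)*t^3 := by
                have h6 := mul_le_mul_of_nonneg_right h3 (le_of_lt (show (0:ℝ) < t^3 by positivity))
                have h7 : 1/(2*t)*t^3 = t^2/2 := by field_simp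
                linarith [h7 ▸ h6]
              nlinarith [h5, hst, hs.le, ht.le]
    have e2 : ((N:ℝ)+1+1) = (N:ℝ)+2 := by ring
    push_cast at ih ⊢
    rw [e2]
    linarith

private lemma cheb (Q : ℕ) :
    ∑ p ∈ (Finset.range (Q+1)).filter Nat.Prime, Real.log p ≤ Q * Real.log 4 := by
  have h1 : ∑ p ∈ (Finset.range (Q+1)).filter Nat.Prime, Real.log p
      = Real.log (primorial Q) := by
    rw [primorial, Nat.cast_prod, Real.log_prod]
    intro p hp
    exact_mod_cast (Nat.Prime.pos (Finset.mem_filter.mp hp).2).ne'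
  rw [h1]
  calc Real.log (primorial Q) ≤ Real.log ((4:ℝ)^Q) := by
        apply Real.log_le_log (by exact_mod_cast primorial_pos Q)
        exact_mod_cast primorial_le_4_pow Q
    _ = Q * Real.log 4 := by rw [Real.log_pow]

private lemma ppow_bound {p a : ℕ} (hp : 2 ≤ p) (ha : 2 ≤ a) :
    ((p:ℝ))^2 * 2^a / 4 ≤ (p:ℝ)^a := by
  obtain ⟨b, rfl⟩ : ∃ b, a = 2 + b := ⟨a - 2, by omega⟩
  have hp' : (2:ℝ) ≤ (p:ℝ) := by exact_mod_cast hp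
  have h2b : (2:ℝ)^b ≤ (p:ℝ)^b := pow_le_pow_left₀ (by norm_num) hp' b
  rw [pow_add, pow_add]
  have hpp : (0:ℝ) ≤ (p:ℝ)^2 := by positivity
  calc (p:ℝ)^2 * (2^2 * 2^b) / 4 = (p:ℝ)^2 * 2^b := by ring
    _ ≤ (p:ℝ)^2 * (p:ℝ)^b := by gcongr

private lemma tailA (p : ℕ) (hp : 2 ≤ p) (K : ℕ) :
    ∑ a ∈ Finset.Icc 2 K, (a:ℝ)/(p:ℝ)^a ≤ 8/(p:ℝ)^2 := by
  have hp0 : (0:ℝ) < (p:ℝ) := by positivity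
  have step : ∀ a ∈ Finset.Icc 2 K, (a:ℝ)/(p:ℝ)^a ≤ 4/(p:ℝ)^2 * ((a:ℝ)/2^a) := by
    intro a ha
    obtain ⟨ha2, -⟩ := Finset.mem_Icc.mp ha
    have h1 : (a:ℝ)/(p:ℝ)^a ≤ (a:ℝ)/((p:ℝ)^2 * 2^a / 4) := by
      apply div_le_div_of_nonneg_left (by positivity) (by positivity) (ppow_bound hp ha2)
    calc (a:ℝ)/(p:ℝ)^a ≤ (a:ℝ)/((p:ℝ)^2 * 2^a / 4) := h1
      _ = 4/(p:ℝ)^2 * ((a:ℝ)/2^a) := by field_simp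
  calc ∑ a ∈ Finset.Icc 2 K, (a:ℝ)/(p:ℝ)^a
      ≤ ∑ a ∈ Finset.Icc 2 K, 4/(p:ℝ)^2 * ((a:ℝ)/2^a) := Finset.sum_le_sum step
    _ = 4/(p:ℝ)^2 * ∑ a ∈ Finset.Icc 2 K, (a:ℝ)/2^a := by rw [Finset.mul_sum]
    _ ≤ 4/(p:ℝ)^2 * 2 := by
        apply mul_le_mul_of_nonneg_left ?_ (by positivity)
        calc ∑ a ∈ Finset.Icc 2 K, (a:ℝ)/2^a
            ≤ ∑ a ∈ Finset.range (K+1), (a:ℝ)/2^a := by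
              apply Finset.sum_le_sum_of_subset_of_nonneg
              · intro a ha; simp only [Finset.mem_Icc] at ha
                exact Finset.mem_range.mpr (by omega)
              · intro a _ _; positivity
          _ ≤ 2 := by rw [geomA]; have : (0:ℝ) ≤ (2*(K+1:ℕ)+2)/2^(K+1) := by positivity
                      push_cast at this ⊢; linarith
    _ = 8/(p:ℝ)^2 := by ring

private lemma tailB (p : ℕ) (hp : 2 ≤ p) (K : ℕ) :
    ∑ a ∈ Finset.Icc 2 K, ((a:ℝ))^2/(p:ℝ)^a ≤ 24/(p:ℝ)^2 := by
  have hp0 : (0:ℝ) < (p:ℝ) := by positivity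
  have step : ∀ a ∈ Finset.Icc 2 K, ((a:ℝ))^2/(p:ℝ)^a ≤ 4/(p:ℝ)^2 * (((a:ℝ))^2/2^a) := by
    intro a ha
    obtain ⟨ha2, -⟩ := Finset.mem_Icc.mp ha
    have h1 : ((a:ℝ))^2/(p:ℝ)^a ≤ ((a:ℝ))^2/((p:ℝ)^2 * 2^a / 4) := by
      apply div_le_div_of_nonneg_left (by positivity) (by positivity) (ppow_bound hp ha2)
    calc ((a:ℝ))^2/(p:ℝ)^a ≤ ((a:ℝ))^2/((p:ℝ)^2 * 2^a / 4) := h1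
      _ = 4/(p:ℝ)^2 * (((a:ℝ))^2/2^a) := by field_simp
  calc ∑ a ∈ Finset.Icc 2 K, ((a:ℝ))^2/(p:ℝ)^a
      ≤ ∑ a ∈ Finset.Icc 2 K, 4/(p:ℝ)^2 * (((a:ℝ))^2/2^a) := Finset.sum_le_sum step
    _ = 4/(p:ℝ)^2 * ∑ a ∈ Finset.Icc 2 K, ((a:ℝ))^2/2^a := by rw [Finset.mul_sum]
    _ ≤ 4/(p:ℝ)^2 * 6 := by
        apply mul_le_mul_of_nonneg_left ?_ (by positivity)
        calc ∑ a ∈ Finset.Icc 2 K, ((a:ℝ))^2/2^a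
            ≤ ∑ a ∈ Finset.range (K+1), ((a:ℝ))^2/2^a := by
              apply Finset.sum_le_sum_of_subset_of_nonneg
              · intro a ha; simp only [Finset.mem_Icc] at ha
                exact Finset.mem_range.mpr (by omega)
              · intro a _ _; positivity
          _ ≤ 6 := by rw [geomB]
                      have : (0:ℝ) ≤ (2*((K+1:ℕ):ℝ)^2+4*(K+1:ℕ)+6)/2^(K+1) := by positivity
                      push_cast at this ⊢; linarith
    _ = 24/(p:ℝ)^2 := by ring

private lemma baselIcc (N : ℕ) : ∑ k ∈ Finset.Icc 2 N, (1:ℝ)/(k:ℝ)^2 ≤ 1 := by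
  rcases Nat.lt_or_ge N 2 with hN | hN
  · rw [Finset.Icc_eq_empty (by omega)]; simp
  · have hN' : N - 1 + 1 = N := by omega
    have hb := basel (N-1)
    rw [hN'] at hb
    have h0 : (0:ℝ) ≤ 1/(((N-1:ℕ):ℝ)+1) := by positivity
    linarith

private lemma sqrtlogIcc (N : ℕ) : ∑ k ∈ Finset.Icc 2 N, Real.log k/(k:ℝ)^2 ≤ 4 := by
  rcases Nat.lt_or_ge N 2 with hN | hN
  · rw [Finset.Icc_eq_empty (by omega)]; simp
  · have hN' : N - 1 + 1 = N := by omega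
    have hb := sqrtlog (N-1)
    rw [hN'] at hb
    have h0 : (0:ℝ) ≤ 4/Real.sqrt (((N-1:ℕ):ℝ)+1) := by positivity
    linarith

private lemma euler_le (h : ℕ → ℝ) (hpos : ∀ n, 0 ≤ h n) (h1 : h 1 = 1)
    (hm : ∀ m n : ℕ, Nat.Coprime m n → h (m * n) = h m * h n) (N : ℕ) :
    ∑ n ∈ Finset.Icc 1 N, h n ≤
      ∏ p ∈ (Finset.Icc 1 N).filter Nat.Prime, ∑ a ∈ Finset.range (N+1), h (p ^ a) := by
  classical
  set P := (Finset.Icc 1 N).filter Nat.Prime with hP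
  rw [Finset.prod_sum]
  set G : ((p : ℕ) → p ∈ P → ℕ) → ℝ := fun g => ∏ x ∈ P.attach, h (x.1 ^ g x.1 x.2) with hG
  set e : ℕ → ((p : ℕ) → p ∈ P → ℕ) := fun n p _ => n.factorization p with he
  have hval : ∀ n ∈ Finset.Icc 1 N, h n = G (e n) := by
    intro n hn
    obtain ⟨hn1, hnN⟩ := Finset.mem_Icc.mp hn
    have hn0 : n ≠ 0 := by omega
    rw [Nat.multiplicative_factorization h hm h1 hn0,
      Nat.prod_factorization_eq_prod_primeFactors]
    have hsub : n.primeFactors ⊆ P := by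
      intro p hp
      obtain ⟨hpp, hpd, -⟩ := Nat.mem_primeFactors.mp hp
      exact Finset.mem_filter.mpr ⟨Finset.mem_Icc.mpr
        ⟨hpp.one_lt.le, le_trans (Nat.le_of_dvd (by omega) hpd) hnN⟩, hpp⟩
    rw [hG]
    simp only
    rw [Finset.prod_attach P (fun p => h (p ^ n.factorization p))]
    refine Finset.prod_subset hsub ?_
    intro p _ hp
    have : n.factorization p = 0 := by
      rw [← Finsupp.notMem_support_iff, Nat.support_factorization]
      exact hp
    rw [this, pow_zero, h1]
  have hmem : ∀ n ∈ Finset.Icc 1 N, e n ∈ P.pi fun _ => Finset.range (N+1) := by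
    intro n hn
    obtain ⟨hn1, hnN⟩ := Finset.mem_Icc.mp hn
    refine Finset.mem_pi.mpr fun p _ => Finset.mem_range.mpr ?_
    exact lt_of_lt_of_le (Nat.factorization_lt p (by omega)) (by omega)
  have hinj : ∀ n ∈ Finset.Icc 1 N, ∀ m ∈ Finset.Icc 1 N, e n = e m → n = m := by
    intro n hn m hm' hnm
    obtain ⟨hn1, hnN⟩ := Finset.mem_Icc.mp hn
    obtain ⟨hm1, hmN⟩ := Finset.mem_Icc.mp hm'
    have key : ∀ p, n.factorization p = m.factorization p := by
      intro p
      by_cases hpp : p.Prime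
      · by_cases hpN : p ≤ N
        · have hpP : p ∈ P := Finset.mem_filter.mpr
            ⟨Finset.mem_Icc.mpr ⟨hpp.one_lt.le, hpN⟩, hpp⟩
          exact congrFun (congrFun hnm p) hpP
        · rw [Nat.factorization_eq_zero_of_not_dvd, Nat.factorization_eq_zero_of_not_dvd]
          · intro hd; exact hpN (le_trans (Nat.le_of_dvd (by omega) hd) hmN)
          · intro hd; exact hpN (le_trans (Nat.le_of_dvd (by omega) hd) hnN)
      · rw [Nat.factorization_eq_zero_of_not_prime _ hpp,
          Nat.factorization_eq_zero_of_not_prime _ hpp]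
    exact Nat.factorization_inj (by simp; omega) (by simp; omega) (Finsupp.ext key)
  calc ∑ n ∈ Finset.Icc 1 N, h n = ∑ n ∈ Finset.Icc 1 N, G (e n) :=
        Finset.sum_congr rfl hval
    _ = ∑ g ∈ (Finset.Icc 1 N).image e, G g := (Finset.sum_image hinj).symm
    _ ≤ ∑ g ∈ P.pi (fun _ => Finset.range (N+1)), G g := by
        refine Finset.sum_le_sum_of_subset_of_nonneg ?_ ?_
        · exact Finset.image_subset_iff.mpr hmem
        · intro g _ _
          exact Finset.prod_nonneg fun x _ => hpos _

private lemma logsum_le (f : ℕ → ℝ) (hpos : ∀ n, 0 ≤ f n)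
    (hmul : ∀ m n : ℕ, Nat.Coprime m n → f (m * n) = f m * f n)
    {C : ℝ} (hC : 0 < C) (hpk : ∀ p k : ℕ, p.Prime → 1 ≤ k → f (p ^ k) ≤ C * k)
    (N : ℕ) (hN : 2 ≤ N) :
    ∑ n ∈ Finset.Icc 1 N, f n * Real.log n ≤
      C * (Real.log 4 + 96) * ((N:ℝ) * ∑ m ∈ Finset.Icc 1 N, f m / m) := by
  classical
  set P := (Finset.Icc 1 N).filter Nat.Prime with hP
  set T := ∑ m ∈ Finset.Icc 1 N, f m / m with hT
  have hT0 : 0 ≤ T := Finset.sum_nonneg fun m _ => div_nonneg (hpos m) (Nat.cast_nonneg m)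
  have Ssub : ∀ Q : ℕ, Q ≤ N → ∑ m ∈ Finset.Icc 1 Q, f m ≤ (Q:ℝ) * T := by
    intro Q hQ
    calc ∑ m ∈ Finset.Icc 1 Q, f m ≤ ∑ m ∈ Finset.Icc 1 Q, (Q:ℝ) * (f m / m) := by
          apply Finset.sum_le_sum
          intro m hm
          obtain ⟨hm1, hmQ⟩ := Finset.mem_Icc.mp hm
          have hm0 : (0:ℝ) < (m:ℝ) := by exact_mod_cast hm1
          rw [show (Q:ℝ) * (f m / m) = (Q:ℝ) * f m / m by ring, le_div_iff₀ hm0]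
          have hQm : (m:ℝ) ≤ (Q:ℝ) := by exact_mod_cast hmQ
          nlinarith [hpos m]
      _ = (Q:ℝ) * ∑ m ∈ Finset.Icc 1 Q, f m / m := by rw [Finset.mul_sum]
      _ ≤ (Q:ℝ) * T := by
          apply mul_le_mul_of_nonneg_left ?_ (Nat.cast_nonneg Q)
          apply Finset.sum_le_sum_of_subset_of_nonneg (Finset.Icc_subset_Icc_right hQ)
          intro m _ _; exact div_nonneg (hpos m) (Nat.cast_nonneg m)
  -- Step 0 : rewrite the log-weighted sum over prime powers
  have step0 : ∑ n ∈ Finset.Icc 1 N, f n * Real.log n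
      = ∑ p ∈ P, ∑ n ∈ (Finset.Icc 1 N).filter (fun n => p ∣ n),
          f n * ((n.factorization p : ℝ) * Real.log p) := by
    have hterm : ∀ n ∈ Finset.Icc 1 N, f n * Real.log n
        = ∑ p ∈ n.primeFactors, f n * ((n.factorization p : ℝ) * Real.log p) := by
      intro n hn
      obtain ⟨hn1, hnN⟩ := Finset.mem_Icc.mp hn
      have hn0 : n ≠ 0 := by omega
      have hre : (n:ℝ) = ∏ p ∈ n.primeFactors, ((p:ℝ)) ^ (n.factorization p) := by
        conv_lhs => rw [← Nat.factorization_prod_pow_eq_self hn0]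
        rw [Nat.prod_factorization_eq_prod_primeFactors]
        push_cast
        rfl
      have hlogn : Real.log n
          = ∑ p ∈ n.primeFactors, (n.factorization p : ℝ) * Real.log p := by
        rw [hre, Real.log_prod]
        · exact Finset.sum_congr rfl fun p hp => by rw [Real.log_pow]
        · intro p hp
          have := (Nat.prime_of_mem_primeFactors hp).pos
          positivity
      rw [hlogn, Finset.mul_sum]
    rw [Finset.sum_congr rfl hterm]
    apply Finset.sum_comm'
    intro n p
    simp only [Finset.mem_filter, Finset.mem_Icc, Nat.mem_primeFactors, hP]
    constructor
    · rintro ⟨⟨hn1, hnN⟩, hpp, hpd, hn0⟩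
      exact ⟨⟨⟨hn1, hnN⟩, hpd⟩, ⟨hpp.one_lt.le, le_trans (Nat.le_of_dvd (by omega) hpd) hnN⟩, hpp⟩
    · rintro ⟨⟨⟨hn1, hnN⟩, hpd⟩, ⟨-, -⟩, hpp⟩
      exact ⟨⟨hn1, hnN⟩, hpp, hpd, by omega⟩
  -- inner bound for a fixed prime p
  have inner : ∀ p ∈ P, ∑ n ∈ (Finset.Icc 1 N).filter (fun n => p ∣ n),
      f n * ((n.factorization p : ℝ) * Real.log p)
      ≤ C * (Real.log p * ∑ m ∈ Finset.Icc 1 (N/p), f m)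
        + C * ∑ a ∈ Finset.Icc 2 N, ((a:ℝ))^2 * Real.log p
            * ∑ m ∈ Finset.Icc 1 (N/p^a), f m := by
    intro p hpP
    obtain ⟨hpI, hp⟩ := Finset.mem_filter.mp hpP
    obtain ⟨-, hpN⟩ := Finset.mem_Icc.mp hpI
    have hp2 := hp.two_le
    have hlogp : 0 ≤ Real.log p := Real.log_nonneg (by exact_mod_cast hp.one_lt.le)
    have hbij : ∑ n ∈ (Finset.Icc 1 N).filter (fun n => p ∣ n),
        f n * ((n.factorization p : ℝ) * Real.log p)
        = ∑ q ∈ (Finset.Icc 1 N).sigma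
            (fun a => (Finset.Icc 1 (N/p^a)).filter (fun m => ¬ p ∣ m)),
            f (p^q.1 * q.2) * ((q.1 : ℝ) * Real.log p) := by
      refine Finset.sum_nbij'
        (i := fun n => ⟨n.factorization p, n / p ^ n.factorization p⟩)
        (j := fun q => p ^ q.1 * q.2) ?_ ?_ ?_ ?_ ?_
      · intro n hn
        obtain ⟨hnI, hpd⟩ := Finset.mem_filter.mp hn
        obtain ⟨hn1, hnN⟩ := Finset.mem_Icc.mp hnI
        have hn0 : n ≠ 0 := by omega
        refine Finset.mem_sigma.mpr ⟨?_, ?_⟩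
        · exact Finset.mem_Icc.mpr ⟨hp.factorization_pos_of_dvd hn0 hpd,
            le_trans (Nat.factorization_lt p hn0).le hnN⟩
        · refine Finset.mem_filter.mpr ⟨Finset.mem_Icc.mpr ⟨Nat.ordCompl_pos p hn0, ?_⟩,
            Nat.not_dvd_ordCompl hp hn0⟩
          exact Nat.div_le_div_right hnN
      · rintro ⟨a, m⟩ hq
        simp only [Finset.mem_sigma, Finset.mem_filter, Finset.mem_Icc] at hq
        obtain ⟨⟨ha1, haN⟩, ⟨hm1, hmN⟩, hpm⟩ := hq
        refine Finset.mem_filter.mpr ⟨Finset.mem_Icc.mpr ⟨?_, ?_⟩, ?_⟩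
        · have h9 : m ≠ 0 := by omega
          exact Nat.one_le_iff_ne_zero.mpr (Nat.mul_ne_zero (pow_ne_zero a hp.pos.ne') h9)
        · calc p^a * m = m * p^a := by ring
            _ ≤ N := (Nat.le_div_iff_mul_le (pow_pos hp.pos a)).mp hmN
        · have h9 : a ≠ 0 := by omega
          exact dvd_mul_of_dvd_left (dvd_pow_self p h9) m
      · intro n hn
        exact Nat.ordProj_mul_ordCompl_eq_self n p
      · rintro ⟨a, m⟩ hq
        simp only [Finset.mem_sigma, Finset.mem_filter, Finset.mem_Icc] at hq
        obtain ⟨⟨ha1, haN⟩, ⟨hm1, hmN⟩, hpm⟩ := hq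
        have hfac : (p^a * m).factorization p = a := by
          have h9 : m ≠ 0 := by omega
          rw [Nat.factorization_mul (pow_ne_zero a hp.pos.ne') h9]
          rw [Finsupp.add_apply, hp.factorization_pow, Finsupp.single_eq_same,
            Nat.factorization_eq_zero_of_not_dvd hpm]
          omega
        simp only [hfac]
        rw [Nat.mul_div_cancel_left m (pow_pos hp.pos a)]
      · intro n hn
        rw [Nat.ordProj_mul_ordCompl_eq_self n p]
    rw [hbij]
    have hterm2 : ∀ q ∈ (Finset.Icc 1 N).sigma
        (fun a => (Finset.Icc 1 (N/p^a)).filter (fun m => ¬ p ∣ m)),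
        f (p^q.1 * q.2) * ((q.1 : ℝ) * Real.log p)
          ≤ C * (((q.1:ℝ))^2 * Real.log p * f q.2) := by
      rintro ⟨a, m⟩ hq
      simp only [Finset.mem_sigma, Finset.mem_filter, Finset.mem_Icc] at hq
      obtain ⟨⟨ha1, haN⟩, ⟨hm1, hmN⟩, hpm⟩ := hq
      have hcop : Nat.Coprime (p^a) m :=
        Nat.Coprime.pow_left a ((Nat.Prime.coprime_iff_not_dvd hp).mpr hpm)
      have hfm := hpos m
      have ha0 : (0:ℝ) ≤ (a:ℝ) := Nat.cast_nonneg a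
      calc f (p^a * m) * ((a:ℝ) * Real.log p)
          = f (p^a) * f m * ((a:ℝ) * Real.log p) := by rw [hmul _ _ hcop]
        _ ≤ (C * a) * f m * ((a:ℝ) * Real.log p) := by
            apply mul_le_mul_of_nonneg_right
              (mul_le_mul_of_nonneg_right (hpk p a hp ha1) hfm) (by positivity)
        _ = C * (((a:ℝ))^2 * Real.log p * f m) := by ring
    calc ∑ q ∈ (Finset.Icc 1 N).sigma
          (fun a => (Finset.Icc 1 (N/p^a)).filter (fun m => ¬ p ∣ m)),
          f (p^q.1 * q.2) * ((q.1 : ℝ) * Real.log p)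
        ≤ ∑ q ∈ (Finset.Icc 1 N).sigma
          (fun a => (Finset.Icc 1 (N/p^a)).filter (fun m => ¬ p ∣ m)),
          C * (((q.1:ℝ))^2 * Real.log p * f q.2) := Finset.sum_le_sum hterm2
      _ ≤ ∑ q ∈ (Finset.Icc 1 N).sigma (fun a => Finset.Icc 1 (N/p^a)),
          C * (((q.1:ℝ))^2 * Real.log p * f q.2) := by
          apply Finset.sum_le_sum_of_subset_of_nonneg
          · intro q hq
            obtain ⟨haI, hmI⟩ := Finset.mem_sigma.mp hq
            exact Finset.mem_sigma.mpr ⟨haI, Finset.mem_of_mem_filter _ hmI⟩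
          · intro q _ _
            have := hpos q.2
            positivity
      _ = ∑ a ∈ Finset.Icc 1 N, ∑ m ∈ Finset.Icc 1 (N/p^a),
          C * (((a:ℝ))^2 * Real.log p * f m) := Finset.sum_sigma _ _ _
      _ = ∑ a ∈ Finset.Icc 1 N,
          C * (((a:ℝ))^2 * Real.log p * ∑ m ∈ Finset.Icc 1 (N/p^a), f m) := by
          apply Finset.sum_congr rfl
          intro a _
          rw [← Finset.mul_sum, ← Finset.mul_sum]
      _ ≤ C * (Real.log p * ∑ m ∈ Finset.Icc 1 (N/p), f m)
        + C * ∑ a ∈ Finset.Icc 2 N, ((a:ℝ))^2 * Real.log p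
            * ∑ m ∈ Finset.Icc 1 (N/p^a), f m := by
          have hsplit : Finset.Icc 1 N = insert 1 (Finset.Icc 2 N) := by
            ext k; simp only [Finset.mem_Icc, Finset.mem_insert]; omega
          rw [hsplit, Finset.sum_insert (by simp)]
          rw [← Finset.mul_sum]
          apply add_le_add
          · apply le_of_eq
            norm_num
          · apply le_of_eq
            apply congrArg
            apply Finset.sum_congr rfl
            intro a _
            ring
  have part1 : ∑ p ∈ P, Real.log p * ∑ m ∈ Finset.Icc 1 (N/p), f m
      ≤ Real.log 4 * ((N:ℝ) * T) := by
    have hswap : ∑ p ∈ P, Real.log p * ∑ m ∈ Finset.Icc 1 (N/p), f m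
        = ∑ m ∈ Finset.Icc 1 N, ∑ p ∈ P.filter (fun p => m * p ≤ N), Real.log p * f m := by
      have h1' : ∀ p ∈ P, Real.log p * ∑ m ∈ Finset.Icc 1 (N/p), f m
          = ∑ m ∈ (Finset.Icc 1 N).filter (fun m => m * p ≤ N), Real.log p * f m := by
        intro p hpP
        obtain ⟨hpI, hp⟩ := Finset.mem_filter.mp hpP
        have hset : Finset.Icc 1 (N/p) = (Finset.Icc 1 N).filter (fun m => m * p ≤ N) := by
          ext m
          simp only [Finset.mem_Icc, Finset.mem_filter]
          constructor
          · rintro ⟨h1'', h2''⟩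
            have h3'' := (Nat.le_div_iff_mul_le hp.pos).mp h2''
            have h4'' : m ≤ m * p := Nat.le_mul_of_pos_right m hp.pos
            exact ⟨⟨h1'', by omega⟩, h3''⟩
          · rintro ⟨⟨h1'', -⟩, h3''⟩
            exact ⟨h1'', (Nat.le_div_iff_mul_le hp.pos).mpr h3''⟩
        rw [hset, Finset.mul_sum]
      rw [Finset.sum_congr rfl h1']
      apply Finset.sum_comm'
      intro p m
      simp only [Finset.mem_filter]
      tauto
    rw [hswap]
    have hin : ∀ m ∈ Finset.Icc 1 N, ∑ p ∈ P.filter (fun p => m * p ≤ N), Real.log p * f m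
        ≤ Real.log 4 * ((N:ℝ) * (f m / m)) := by
      intro m hm
      obtain ⟨hm1, hmN⟩ := Finset.mem_Icc.mp hm
      have hm0 : (0:ℝ) < (m:ℝ) := by exact_mod_cast hm1
      have hsub : P.filter (fun p => m * p ≤ N) ⊆ (Finset.range (N/m + 1)).filter Nat.Prime := by
        intro p hp'
        simp only [Finset.mem_filter, hP, Finset.mem_Icc] at hp'
        obtain ⟨⟨-, hpp⟩, hmp⟩ := hp'
        refine Finset.mem_filter.mpr ⟨Finset.mem_range.mpr ?_, hpp⟩
        have : p ≤ N / m := (Nat.le_div_iff_mul_le (show 0 < m by omega)).mpr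
          (by rw [Nat.mul_comm]; exact hmp)
        omega
      calc ∑ p ∈ P.filter (fun p => m * p ≤ N), Real.log p * f m
          = (∑ p ∈ P.filter (fun p => m * p ≤ N), Real.log p) * f m := by
            rw [Finset.sum_mul]
        _ ≤ (((N/m : ℕ):ℝ) * Real.log 4) * f m := by
            apply mul_le_mul_of_nonneg_right ?_ (hpos m)
            calc ∑ p ∈ P.filter (fun p => m * p ≤ N), Real.log p
                ≤ ∑ p ∈ (Finset.range (N/m + 1)).filter Nat.Prime, Real.log p := by
                  apply Finset.sum_le_sum_of_subset_of_nonneg hsub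
                  intro p hp' _
                  have hpp := (Finset.mem_filter.mp hp').2
                  exact Real.log_nonneg (by exact_mod_cast hpp.one_lt.le)
              _ ≤ ((N/m : ℕ):ℝ) * Real.log 4 := cheb (N/m)
        _ ≤ (((N:ℝ)/(m:ℝ)) * Real.log 4) * f m := by
            apply mul_le_mul_of_nonneg_right ?_ (hpos m)
            apply mul_le_mul_of_nonneg_right Nat.cast_div_le (Real.log_nonneg (by norm_num))
        _ = Real.log 4 * ((N:ℝ) * (f m / m)) := by ring
    calc ∑ m ∈ Finset.Icc 1 N, ∑ p ∈ P.filter (fun p => m * p ≤ N), Real.log p * f m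
        ≤ ∑ m ∈ Finset.Icc 1 N, Real.log 4 * ((N:ℝ) * (f m / m)) := Finset.sum_le_sum hin
      _ = Real.log 4 * ((N:ℝ) * T) := by
          rw [hT, Finset.mul_sum, Finset.mul_sum]
  have part2 : ∑ p ∈ P, ∑ a ∈ Finset.Icc 2 N, ((a:ℝ))^2 * Real.log p
      * ∑ m ∈ Finset.Icc 1 (N/p^a), f m ≤ 96 * ((N:ℝ) * T) := by
    have hinner : ∀ p ∈ P, ∑ a ∈ Finset.Icc 2 N, ((a:ℝ))^2 * Real.log p
        * ∑ m ∈ Finset.Icc 1 (N/p^a), f m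
        ≤ (Real.log p * (24/(p:ℝ)^2)) * ((N:ℝ) * T) := by
      intro p hpP
      obtain ⟨hpI, hp⟩ := Finset.mem_filter.mp hpP
      have hp2 := hp.two_le
      have hlogp : 0 ≤ Real.log p := Real.log_nonneg (by exact_mod_cast hp.one_lt.le)
      have hppos : (0:ℝ) < (p:ℝ) := by exact_mod_cast hp.pos
      calc ∑ a ∈ Finset.Icc 2 N, ((a:ℝ))^2 * Real.log p * ∑ m ∈ Finset.Icc 1 (N/p^a), f m
          ≤ ∑ a ∈ Finset.Icc 2 N, (Real.log p * ((N:ℝ)*T)) * (((a:ℝ))^2/(p:ℝ)^a) := by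
            apply Finset.sum_le_sum
            intro a ha
            have hS : ∑ m ∈ Finset.Icc 1 (N/p^a), f m ≤ ((N/p^a : ℕ):ℝ) * T :=
              Ssub (N/p^a) (Nat.div_le_self N _)
            have hcast : ((N/p^a : ℕ):ℝ) ≤ (N:ℝ)/(p:ℝ)^a := by
              have h9 := Nat.cast_div_le (α := ℝ) (m := N) (n := p^a)
              push_cast at h9 ⊢
              exact h9
            have hTa : ∑ m ∈ Finset.Icc 1 (N/p^a), f m ≤ (N:ℝ)/(p:ℝ)^a * T :=
              le_trans hS (mul_le_mul_of_nonneg_right hcast hT0)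
            have hS0 : 0 ≤ ∑ m ∈ Finset.Icc 1 (N/p^a), f m :=
              Finset.sum_nonneg fun m _ => hpos m
            calc ((a:ℝ))^2 * Real.log p * ∑ m ∈ Finset.Icc 1 (N/p^a), f m
                ≤ ((a:ℝ))^2 * Real.log p * ((N:ℝ)/(p:ℝ)^a * T) := by
                  apply mul_le_mul_of_nonneg_left hTa (by positivity)
              _ = (Real.log p * ((N:ℝ)*T)) * (((a:ℝ))^2/(p:ℝ)^a) := by
                  field_simp
        _ = (Real.log p * ((N:ℝ)*T)) * ∑ a ∈ Finset.Icc 2 N, ((a:ℝ))^2/(p:ℝ)^a := by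
            rw [eq_comm, Finset.mul_sum]
        _ ≤ (Real.log p * ((N:ℝ)*T)) * (24/(p:ℝ)^2) := by
            apply mul_le_mul_of_nonneg_left (tailB p hp2 N)
            exact mul_nonneg hlogp (mul_nonneg (Nat.cast_nonneg N) hT0)
        _ = (Real.log p * (24/(p:ℝ)^2)) * ((N:ℝ) * T) := by ring
    calc ∑ p ∈ P, ∑ a ∈ Finset.Icc 2 N, ((a:ℝ))^2 * Real.log p
        * ∑ m ∈ Finset.Icc 1 (N/p^a), f m
        ≤ ∑ p ∈ P, (Real.log p * (24/(p:ℝ)^2)) * ((N:ℝ) * T) := Finset.sum_le_sum hinner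
      _ = (∑ p ∈ P, Real.log p * (24/(p:ℝ)^2)) * ((N:ℝ) * T) := by rw [Finset.sum_mul]
      _ ≤ 96 * ((N:ℝ) * T) := by
          apply mul_le_mul_of_nonneg_right ?_ (mul_nonneg (Nat.cast_nonneg N) hT0)
          calc ∑ p ∈ P, Real.log p * (24/(p:ℝ)^2)
              = 24 * ∑ p ∈ P, Real.log p/(p:ℝ)^2 := by
                rw [Finset.mul_sum]
                apply Finset.sum_congr rfl
                intro p _
                ring
            _ ≤ 24 * ∑ k ∈ Finset.Icc 2 N, Real.log k/(k:ℝ)^2 := by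
                apply mul_le_mul_of_nonneg_left ?_ (by norm_num)
                apply Finset.sum_le_sum_of_subset_of_nonneg
                · intro p hp'
                  simp only [hP, Finset.mem_filter, Finset.mem_Icc] at hp'
                  exact Finset.mem_Icc.mpr ⟨hp'.2.two_le, hp'.1.2⟩
                · intro k hk _
                  obtain ⟨hk2, -⟩ := Finset.mem_Icc.mp hk
                  have hk1 : (1:ℝ) ≤ (k:ℝ) := by exact_mod_cast le_trans (by norm_num) hk2
                  exact div_nonneg (Real.log_nonneg hk1) (by positivity)
            _ ≤ 24 * 4 := mul_le_mul_of_nonneg_left (sqrtlogIcc N) (by norm_num)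
            _ = 96 := by norm_num
  rw [step0]
  calc ∑ p ∈ P, ∑ n ∈ (Finset.Icc 1 N).filter (fun n => p ∣ n),
        f n * ((n.factorization p : ℝ) * Real.log p)
      ≤ ∑ p ∈ P, (C * (Real.log p * ∑ m ∈ Finset.Icc 1 (N/p), f m)
        + C * ∑ a ∈ Finset.Icc 2 N, ((a:ℝ))^2 * Real.log p
            * ∑ m ∈ Finset.Icc 1 (N/p^a), f m) :=
        Finset.sum_le_sum inner
    _ = C * (∑ p ∈ P, Real.log p * ∑ m ∈ Finset.Icc 1 (N/p), f m)
        + C * ∑ p ∈ P, ∑ a ∈ Finset.Icc 2 N, ((a:ℝ))^2 * Real.log p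
            * ∑ m ∈ Finset.Icc 1 (N/p^a), f m := by
        rw [Finset.sum_add_distrib, ← Finset.mul_sum, ← Finset.mul_sum]
    _ ≤ C * (Real.log 4 * ((N:ℝ)*T)) + C * (96 * ((N:ℝ)*T)) := by
        apply add_le_add
        · exact mul_le_mul_of_nonneg_left part1 hC.le
        · exact mul_le_mul_of_nonneg_left part2 hC.le
    _ = C * (Real.log 4 + 96) * ((N:ℝ) * T) := by ring

private lemma Tbound (f : ℕ → ℝ) (hpos : ∀ n, 0 ≤ f n) (h1 : f 1 = 1)
    (hmul : ∀ m n : ℕ, Nat.Coprime m n → f (m * n) = f m * f n)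
    {C : ℝ} (hC : 0 < C) (hpk : ∀ p k : ℕ, p.Prime → 1 ≤ k → f (p ^ k) ≤ C * k)
    (N : ℕ) (hN : 2 ≤ N) :
    ∑ n ∈ Finset.Icc 1 N, f n / n ≤
      Real.exp ((∑ p ∈ (Finset.Icc 1 N).filter Nat.Prime, f p / p) + 8 * C) := by
  classical
  set P := (Finset.Icc 1 N).filter Nat.Prime with hP
  set h : ℕ → ℝ := fun n => f n / n with hh
  have hhpos : ∀ n, 0 ≤ h n := fun n => div_nonneg (hpos n) (Nat.cast_nonneg n)
  have hh1 : h 1 = 1 := by simp [hh, h1]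
  have hhm : ∀ m n : ℕ, Nat.Coprime m n → h (m * n) = h m * h n := by
    intro m n hmn
    simp only [hh]
    rw [hmul m n hmn, div_mul_div_comm]
    push_cast
    rfl
  have key := euler_le h hhpos hh1 hhm N
  have factor : ∀ p ∈ P,
      ∑ a ∈ Finset.range (N+1), h (p^a) ≤ Real.exp (f p / p + 8*C * (1/(p:ℝ)^2)) := by
    intro p hpP
    obtain ⟨hpI, hp⟩ := Finset.mem_filter.mp hpP
    have hp2 := hp.two_le
    have hppos : (0:ℝ) < p := by exact_mod_cast hp.pos
    have hsplit : Finset.range (N+1) = insert 0 (insert 1 (Finset.Icc 2 N)) := by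
      ext a; simp only [Finset.mem_range, Finset.mem_insert, Finset.mem_Icc]; omega
    have h0 : h (p^0) = 1 := by simp [hh, h1]
    have hone : h (p^1) = f p / p := by simp [hh]
    have tail : ∑ a ∈ Finset.Icc 2 N, h (p^a) ≤ 8*C*(1/(p:ℝ)^2) := by
      calc ∑ a ∈ Finset.Icc 2 N, h (p^a) ≤ ∑ a ∈ Finset.Icc 2 N, C * ((a:ℝ)/(p:ℝ)^a) := by
            apply Finset.sum_le_sum
            intro a ha
            obtain ⟨ha2, -⟩ := Finset.mem_Icc.mp ha
            simp only [hh]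
            push_cast
            rw [div_le_iff₀ (by positivity)]
            calc f (p^a) ≤ C * a := hpk p a hp (by omega)
              _ = C * ((a:ℝ)/(p:ℝ)^a) * (p:ℝ)^a := by field_simp
        _ = C * ∑ a ∈ Finset.Icc 2 N, ((a:ℝ)/(p:ℝ)^a) := by rw [Finset.mul_sum]
        _ ≤ C * (8/(p:ℝ)^2) := mul_le_mul_of_nonneg_left (tailA p hp2 N) hC.le
        _ = 8*C*(1/(p:ℝ)^2) := by ring
    calc ∑ a ∈ Finset.range (N+1), h (p^a)
        = h (p^0) + (h (p^1) + ∑ a ∈ Finset.Icc 2 N, h (p^a)) := by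
          rw [hsplit, Finset.sum_insert (by simp), Finset.sum_insert (by simp)]
      _ ≤ (f p/p + 8*C*(1/(p:ℝ)^2)) + 1 := by
          rw [h0, hone]
          linarith [tail]
      _ ≤ Real.exp (f p/p + 8*C*(1/(p:ℝ)^2)) :=
          Real.add_one_le_exp (f p/p + 8*C*(1/(p:ℝ)^2))
  calc ∑ n ∈ Finset.Icc 1 N, f n / n ≤ ∏ p ∈ P, ∑ a ∈ Finset.range (N+1), h (p^a) := key
    _ ≤ ∏ p ∈ P, Real.exp (f p/p + 8*C*(1/(p:ℝ)^2)) := by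
        apply Finset.prod_le_prod
        · intro p _; exact Finset.sum_nonneg fun a _ => hhpos _
        · exact factor
    _ = Real.exp (∑ p ∈ P, (f p/p + 8*C*(1/(p:ℝ)^2))) := (Real.exp_sum _ _).symm
    _ ≤ Real.exp ((∑ p ∈ P, f p/p) + 8*C) := by
        apply Real.exp_le_exp.mpr
        rw [Finset.sum_add_distrib]
        apply add_le_add (le_refl _)
        calc ∑ p ∈ P, 8*C*(1/(p:ℝ)^2) = 8*C * ∑ p ∈ P, 1/(p:ℝ)^2 := by rw [Finset.mul_sum]
          _ ≤ 8*C*1 := by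
              apply mul_le_mul_of_nonneg_left ?_ (by positivity)
              calc ∑ p ∈ P, 1/(p:ℝ)^2 ≤ ∑ k ∈ Finset.Icc 2 N, 1/(k:ℝ)^2 := by
                    apply Finset.sum_le_sum_of_subset_of_nonneg
                    · intro p hp'
                      simp only [hP, Finset.mem_filter, Finset.mem_Icc] at hp'
                      exact Finset.mem_Icc.mpr ⟨hp'.2.two_le, hp'.1.2⟩
                    · intro k _ _; positivity
                _ ≤ 1 := baselIcc N
          _ = 8*C := by ring

theorem stmt7 (C : ℝ) (hC : 0 < C) :
    ∃ c : ℝ, 0 < c ∧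
      ∀ f : ℕ → ℝ, (∀ n, 0 ≤ f n) → f 1 = 1 →
        (∀ m n : ℕ, Nat.Coprime m n → f (m * n) = f m * f n) →
        (∀ p k : ℕ, p.Prime → 1 ≤ k → f (p ^ k) ≤ C * k) →
        ∀ x : ℝ, 2 ≤ x →
          ∑ n ∈ Finset.Icc 1 ⌊x⌋₊, f n ≤
            c * (x / Real.log x) *
              Real.exp (∑ p ∈ (Finset.Icc 1 ⌊x⌋₊).filter Nat.Prime, f p / p) := by
  have hlog4 : (0:ℝ) < Real.log 4 := Real.log_pos (by norm_num)
  refine ⟨(1 + C * (Real.log 4 + 96)) * Real.exp (8*C), ?_, ?_⟩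
  · apply mul_pos ?_ (Real.exp_pos _)
    nlinarith
  · intro f hpos h1 hmul hpk x hx
    set N := ⌊x⌋₊ with hNdef
    have hN2 : 2 ≤ N := Nat.le_floor (by exact_mod_cast hx)
    have hx0 : (0:ℝ) < x := by linarith
    have hNx : (N:ℝ) ≤ x := Nat.floor_le hx0.le
    have hlogx : 0 < Real.log x := Real.log_pos (by linarith)
    set T := ∑ m ∈ Finset.Icc 1 N, f m / m with hT
    have hT0 : 0 ≤ T :=
      Finset.sum_nonneg fun m _ => div_nonneg (hpos m) (Nat.cast_nonneg m)
    set Psum := ∑ p ∈ (Finset.Icc 1 N).filter Nat.Prime, f p / p with hPsum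
    have hTb : T ≤ Real.exp (Psum + 8*C) := Tbound f hpos h1 hmul hC hpk N hN2
    have hlogsum := logsum_le f hpos hmul hC hpk N hN2
    have hstepB : ∑ n ∈ Finset.Icc 1 N, f n * Real.log (x / n) ≤ x * T := by
      calc ∑ n ∈ Finset.Icc 1 N, f n * Real.log (x / n)
          ≤ ∑ n ∈ Finset.Icc 1 N, x * (f n / n) := by
            apply Finset.sum_le_sum
            intro n hn
            obtain ⟨hn1, -⟩ := Finset.mem_Icc.mp hn
            have hn0 : (0:ℝ) < (n:ℝ) := by exact_mod_cast hn1
            have hq : (0:ℝ) < x / n := by positivity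
            have hl : Real.log (x / n) ≤ x / n := by
              have := Real.log_le_sub_one_of_pos hq
              linarith
            calc f n * Real.log (x / n) ≤ f n * (x / n) :=
                  mul_le_mul_of_nonneg_left hl (hpos n)
              _ = x * (f n / n) := by ring
        _ = x * T := by rw [hT, Finset.mul_sum]
    have hkey : (∑ n ∈ Finset.Icc 1 N, f n) * Real.log x
        ≤ (1 + C*(Real.log 4 + 96)) * (x * T) := by
      have hid : ∀ n ∈ Finset.Icc 1 N, f n * Real.log x
          = f n * Real.log n + f n * Real.log (x/n) := by
        intro n hn
        obtain ⟨hn1, -⟩ := Finset.mem_Icc.mp hn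
        have hn0 : (0:ℝ) < (n:ℝ) := by exact_mod_cast hn1
        have hsplit : Real.log x = Real.log n + Real.log (x/n) := by
          rw [← Real.log_mul (by positivity) (by positivity)]
          congr 1
          field_simp
        rw [hsplit]; ring
      have hc0 : 0 ≤ C * (Real.log 4 + 96) := by positivity
      calc (∑ n ∈ Finset.Icc 1 N, f n) * Real.log x
          = ∑ n ∈ Finset.Icc 1 N, f n * Real.log x := by rw [Finset.sum_mul]
        _ = ∑ n ∈ Finset.Icc 1 N, (f n * Real.log n + f n * Real.log (x/n)) :=
            Finset.sum_congr rfl hid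
        _ = (∑ n ∈ Finset.Icc 1 N, f n * Real.log n)
            + ∑ n ∈ Finset.Icc 1 N, f n * Real.log (x/n) := Finset.sum_add_distrib
        _ ≤ C*(Real.log 4+96)*((N:ℝ)*T) + x*T := add_le_add hlogsum hstepB
        _ ≤ C*(Real.log 4+96)*(x*T) + x*T := by
            have hNT : (N:ℝ)*T ≤ x*T := mul_le_mul_of_nonneg_right hNx hT0
            nlinarith
        _ = (1 + C*(Real.log 4+96)) * (x*T) := by ring
    have final1 : (∑ n ∈ Finset.Icc 1 N, f n) * Real.log x
        ≤ ((1 + C*(Real.log 4+96)) * Real.exp (8*C)) * x * Real.exp Psum := by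
      have h2' : x * T ≤ x * Real.exp (Psum + 8*C) :=
        mul_le_mul_of_nonneg_left hTb hx0.le
      have h3' : (1 + C*(Real.log 4+96)) * (x * T)
          ≤ (1 + C*(Real.log 4+96)) * (x * Real.exp (Psum + 8*C)) := by
        apply mul_le_mul_of_nonneg_left h2'
        nlinarith
      calc (∑ n ∈ Finset.Icc 1 N, f n) * Real.log x
          ≤ (1 + C*(Real.log 4+96)) * (x * T) := hkey
        _ ≤ (1 + C*(Real.log 4+96)) * (x * Real.exp (Psum + 8*C)) := h3'
        _ = ((1 + C*(Real.log 4+96)) * Real.exp (8*C)) * x * Real.exp Psum := by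
            rw [Real.exp_add]; ring
    calc ∑ n ∈ Finset.Icc 1 N, f n
        = (∑ n ∈ Finset.Icc 1 N, f n) * Real.log x / Real.log x := by
          field_simp
      _ ≤ (((1 + C*(Real.log 4+96)) * Real.exp (8*C)) * x * Real.exp Psum) / Real.log x :=
          (div_le_div_iff_of_pos_right hlogx).mpr final1
      _ = (1 + C * (Real.log 4 + 96)) * Real.exp (8*C) * (x / Real.log x) * Real.exp Psum := by
          ring
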